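/- arXiv:2101.07957 — 2 statements merged into one kernel-verified Lean document; each statement's English description precedes it below -/
import Mathlib

section
/- Let λ > 0 and let x_t(i) ∈ ℝ^d for t ∈ [T], i ∈ [k] satisfy ‖x_t(i)‖₂ ≤ L. Define V_t = λI + Σ_{s=1}^t Σ_{i=1}^k x_s(i) x_s(i)ᵀ and ‖x‖_{V^{-1}} = sqrt(xᵀ V^{-1} x). Then Σ_{t=1}^T Σ_{i=1}^k min(1/√k, ‖x_t(i)‖_{V_{t-1}^{-1}}) ≤ sqrt(2dkT · log(1 + L²kT/(dλ))). -/
open Matrix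

lemma aux_one_add_sum_le_prod {ι : Type*} (s : Finset ι) (f : ι → ℝ)
    (hf : ∀ i ∈ s, 0 ≤ f i) : 1 + ∑ i ∈ s, f i ≤ ∏ i ∈ s, (1 + f i) := by
  classical
  induction s using Finset.cons_induction with
  | empty => simp
  | cons a s ha ih =>
    rw [Finset.sum_cons, Finset.prod_cons]
    have hfa : 0 ≤ f a := hf a (Finset.mem_cons_self a s)
    have hs : ∀ i ∈ s, 0 ≤ f i := fun i hi => hf i (Finset.mem_cons_of_mem hi)
    have h1 : (0:ℝ) ≤ ∑ i ∈ s, f i := Finset.sum_nonneg hs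
    have h2 := ih hs
    nlinarith

lemma aux_min_one_le_two_log (s : ℝ) (hs : 0 ≤ s) : min 1 s ≤ 2 * Real.log (1 + s) := by
  have h1s : (0:ℝ) < 1 + s := by linarith
  rcases le_total s 1 with h | h
  · rw [min_eq_right h]
    have hlog : Real.log (1 + s)⁻¹ ≤ (1 + s)⁻¹ - 1 :=
      Real.log_le_sub_one_of_pos (by positivity)
    rw [Real.log_inv] at hlog
    have : s / (1 + s) ≤ Real.log (1 + s) := by
      rw [div_eq_mul_inv]
      have : (1:ℝ) - (1+s)⁻¹ = s * (1+s)⁻¹ := by field_simp; ring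
      linarith [this]
    have h2 : s / 2 ≤ s / (1 + s) := by
      apply div_le_div_of_nonneg_left hs h1s <;> linarith
    linarith
  · rw [min_eq_left h]
    have : Real.log 2 ≤ Real.log (1 + s) := Real.log_le_log (by norm_num) (by linarith)
    have h2 := Real.log_two_gt_d9
    linarith

lemma aux_sum_sqrt_le {ι : Type*} (s : Finset ι) (f : ι → ℝ) (hf : ∀ i ∈ s, 0 ≤ f i) :
    ∑ i ∈ s, Real.sqrt (f i) ≤ Real.sqrt (s.card * ∑ i ∈ s, f i) := by
  have h1 : (∑ i ∈ s, Real.sqrt (f i)) ^ 2 ≤ s.card * ∑ i ∈ s, f i := by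
    calc (∑ i ∈ s, Real.sqrt (f i)) ^ 2 ≤ s.card * ∑ i ∈ s, Real.sqrt (f i) ^ 2 :=
          sq_sum_le_card_mul_sum_sq
      _ = s.card * ∑ i ∈ s, f i := by
          congr 1
          exact Finset.sum_congr rfl fun i hi => Real.sq_sqrt (hf i hi)
  have h2 : 0 ≤ ∑ i ∈ s, Real.sqrt (f i) := Finset.sum_nonneg fun i _ => Real.sqrt_nonneg _
  calc ∑ i ∈ s, Real.sqrt (f i) = Real.sqrt ((∑ i ∈ s, Real.sqrt (f i))^2) := by
        rw [Real.sqrt_sq h2]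
    _ ≤ Real.sqrt (s.card * ∑ i ∈ s, f i) := Real.sqrt_le_sqrt h1

variable {n : Type*} [Fintype n] [DecidableEq n]

lemma aux_trace_eq_sum_eigenvalues {A : Matrix n n ℝ} (hA : A.IsHermitian) :
    A.trace = ∑ i, hA.eigenvalues i := by
  have hU : star (hA.eigenvectorUnitary : Matrix n n ℝ) * (hA.eigenvectorUnitary : Matrix n n ℝ)
      = 1 := hA.eigenvectorUnitary.2.1
  nth_rewrite 1 [hA.spectral_theorem]
  rw [Unitary.conjStarAlgAut_apply, trace_mul_comm, ← mul_assoc, hU, one_mul, trace_diagonal]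
  simp

lemma aux_det_one_add_psd {A : Matrix n n ℝ} (hA : A.PosSemidef) :
    1 + A.trace ≤ (1 + A).det := by
  have h := hA.1
  have hU : (h.eigenvectorUnitary : Matrix n n ℝ) * star (h.eigenvectorUnitary : Matrix n n ℝ)
      = 1 := h.eigenvectorUnitary.2.2
  have key : (1 + A) = (h.eigenvectorUnitary : Matrix n n ℝ) *
      (1 + diagonal (RCLike.ofReal ∘ h.eigenvalues)) * star (h.eigenvectorUnitary : Matrix n n ℝ) := by
    rw [mul_add, add_mul, mul_one, hU]
    exact congrArg (1 + ·) h.spectral_theorem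
  rw [key, det_mul, det_mul, mul_comm, ← mul_assoc, ← det_mul, h.eigenvectorUnitary.2.1, det_one, one_mul]
  have hdiag : (1 + diagonal (RCLike.ofReal ∘ h.eigenvalues) : Matrix n n ℝ)
      = diagonal (fun i => 1 + h.eigenvalues i) := by
    rw [← diagonal_one, diagonal_add]
    rfl
  rw [hdiag, det_diagonal, aux_trace_eq_sum_eigenvalues h]
  exact aux_one_add_sum_le_prod Finset.univ _ (fun i _ => hA.eigenvalues_nonneg i)

variable {n : Type*} [Fintype n] [DecidableEq n]

open scoped MatrixOrder in
lemma aux_det_add_psd {A B : Matrix n n ℝ} (hA : A.PosDef) (hB : B.PosSemidef) :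
    A.det * (1 + (A⁻¹ * B).trace) ≤ (A + B).det := by
  set S := CFC.sqrt A with hSdef
  have hS : S.PosSemidef := (CFC.sqrt_nonneg A).posSemidef
  have hSS : S * S = A := CFC.sqrt_mul_sqrt_self A hA.posSemidef.nonneg
  have hdetS : S.det * S.det = A.det := by rw [← det_mul, hSS]
  have hSne : S.det ≠ 0 := by
    intro h
    rw [h, mul_zero] at hdetS
    exact hA.det_pos.ne' hdetS.symm
  have hSunit : IsUnit S.det := hSne.isUnit
  have hSinv : S * S⁻¹ = 1 := mul_nonsing_inv S hSunit
  have hSinv' : S⁻¹ * S = 1 := nonsing_inv_mul S hSunit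
  have hSiH : (S⁻¹).IsHermitian := hS.1.inv
  set N := S⁻¹ * B * S⁻¹ with hNdef
  have hN : N.PosSemidef := by
    have := hB.conjTranspose_mul_mul_same (S⁻¹)
    rwa [hSiH.eq] at this
  have hkey : A + B = S * (1 + N) * S := by
    rw [hNdef, mul_add, add_mul, mul_one, hSS]
    congr 1
    rw [← mul_assoc, ← mul_assoc, hSinv, one_mul, mul_assoc, hSinv', mul_one]
  have htr : N.trace = (A⁻¹ * B).trace := by
    rw [hNdef, trace_mul_comm, ← mul_assoc]
    congr 2
    rw [← hSS, Matrix.mul_inv_rev]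
  have hdet : (A + B).det = A.det * (1 + N).det := by
    rw [hkey, det_mul, det_mul, mul_right_comm, hdetS]
  rw [hdet, htr.symm]
  exact mul_le_mul_of_nonneg_left (aux_det_one_add_psd hN) hA.det_pos.le

lemma aux_psd_vecMulVec (x : n → ℝ) : (vecMulVec x x).PosSemidef := by
  refine PosSemidef.of_dotProduct_mulVec_nonneg ?_ ?_
  · ext i j
    simp [Matrix.IsHermitian, conjTranspose_apply, vecMulVec_apply, mul_comm]
  · intro y
    have : vecMulVec x x *ᵥ y = (x ⬝ᵥ y) • x := by
      ext i
      simp only [mulVec, vecMulVec_apply, dotProduct, Pi.smul_apply, smul_eq_mul,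
        Finset.sum_mul]
      exact Finset.sum_congr rfl fun j _ => by ring
    rw [this]
    simp only [star_trivial, dotProduct_smul]
    rw [smul_eq_mul, dotProduct_comm y x]
    exact mul_self_nonneg _

lemma aux_trace_mul_vecMulVec (A : Matrix n n ℝ) (x : n → ℝ) :
    (A * vecMulVec x x).trace = x ⬝ᵥ A *ᵥ x := by
  simp only [Matrix.trace, Matrix.diag, Matrix.mul_apply, vecMulVec_apply, dotProduct, mulVec,
    Finset.mul_sum]
  apply Finset.sum_congr rfl
  intro i _
  apply Finset.sum_congr rfl
  intro j _
  ring

lemma aux_det_le_pow {M : Matrix n n ℝ} (hM : M.PosDef) (hn : 0 < Fintype.card n) :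
    M.det ≤ (M.trace / Fintype.card n) ^ (Fintype.card n) := by
  set c := (Fintype.card n : ℝ) with hcdef
  have hc : 0 < c := by rw [hcdef]; exact_mod_cast hn
  have hw : ∑ _i : n, c⁻¹ = 1 := by
    rw [Finset.sum_const, Finset.card_univ, nsmul_eq_mul]
    field_simp; exact hcdef.symm
  have h := Real.geom_mean_le_arith_mean_weighted Finset.univ (fun _ => c⁻¹)
    (fun i => hM.1.eigenvalues i) (fun _ _ => by positivity) hw
    (fun i _ => (hM.eigenvalues_pos i).le)
  have hL : ∀ i, (0:ℝ) ≤ hM.1.eigenvalues i ^ (c⁻¹ : ℝ) :=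
    fun i => Real.rpow_nonneg (hM.eigenvalues_pos i).le _
  have hpow := pow_le_pow_left₀ (Finset.prod_nonneg (fun i _ => hL i)) h (Fintype.card n)
  have hlhs : (∏ i, hM.1.eigenvalues i ^ (c⁻¹:ℝ)) ^ (Fintype.card n) = ∏ i, hM.1.eigenvalues i := by
    rw [← Finset.prod_pow]
    apply Finset.prod_congr rfl
    intro i _
    rw [← Real.rpow_natCast (hM.1.eigenvalues i ^ (c⁻¹:ℝ)) (Fintype.card n),
      ← Real.rpow_mul (hM.eigenvalues_pos i).le]
    rw [show (c⁻¹ * (Fintype.card n : ℝ)) = 1 by field_simp; exact hcdef.symm]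
    exact Real.rpow_one _
  have hrhs : (∑ i, c⁻¹ * hM.1.eigenvalues i) = M.trace / c := by
    rw [← Finset.mul_sum, ← aux_trace_eq_sum_eigenvalues hM.1]
    ring
  rw [hlhs, hrhs] at hpow
  calc M.det = ∏ i, hM.1.eigenvalues i := by
        rw [hM.1.det_eq_prod_eigenvalues]; norm_num
    _ ≤ (M.trace / c) ^ (Fintype.card n) := hpow

lemma aux_sqrt_min (a b : ℝ) : Real.sqrt (min a b) = min (Real.sqrt a) (Real.sqrt b) := by
  rcases le_total a b with h | h
  · rw [min_eq_left h, min_eq_left (Real.sqrt_le_sqrt h)]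
  · rw [min_eq_right h, min_eq_right (Real.sqrt_le_sqrt h)]

theorem elliptic_potential_batched_sqrt {d k T : ℕ} (hd : 0 < d) (hk : 0 < k)
    (L lam : ℝ) (hlam : 0 < lam) (x : ℕ → ℕ → (Fin d → ℝ))
    (hL : ∀ t ∈ Finset.range T, ∀ i ∈ Finset.range k, Real.sqrt (∑ j, (x t i j) ^ 2) ≤ L)
    (V : ℕ → Matrix (Fin d) (Fin d) ℝ)
    (hV : ∀ t, V t = lam • (1 : Matrix (Fin d) (Fin d) ℝ) +
      ∑ s ∈ Finset.range t, ∑ i ∈ Finset.range k, vecMulVec (x s i) (x s i)) :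
    ∑ t ∈ Finset.range T, ∑ i ∈ Finset.range k,
        min (1 / Real.sqrt k) (Real.sqrt (x t i ⬝ᵥ (V t)⁻¹ *ᵥ x t i)) ≤
      Real.sqrt (2 * d * k * T * Real.log (1 + L ^ 2 * k * T / (d * lam))) := by
  classical
  rcases Nat.eq_zero_or_pos T with rfl | hT
  · simpa using Real.sqrt_nonneg _
  have hkR : (0:ℝ) < k := by exact_mod_cast hk
  have hdR : (0:ℝ) < d := by exact_mod_cast hd
  have hTR : (0:ℝ) < T := by exact_mod_cast hT
  have hLnn : 0 ≤ L :=
    le_trans (Real.sqrt_nonneg _) (hL 0 (Finset.mem_range.mpr hT) 0 (Finset.mem_range.mpr hk))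
  -- positive definiteness
  have hB : ∀ t, (∑ i ∈ Finset.range k, vecMulVec (x t i) (x t i)).PosSemidef := by
    intro t
    refine Finset.sum_induction _ _ (fun a b ha hb => ha.add hb) Matrix.PosSemidef.zero
      (fun i _ => aux_psd_vecMulVec _)
  have hVpd : ∀ t, (V t).PosDef := by
    intro t
    rw [hV t]
    refine Matrix.PosDef.add_posSemidef ?_ ?_
    · rw [Matrix.smul_one_eq_diagonal]
      exact Matrix.PosDef.diagonal (fun _ => hlam)
    · exact Finset.sum_induction _ _ (fun a b ha hb => ha.add hb) Matrix.PosSemidef.zero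
        (fun s _ => Finset.sum_induction _ _ (fun a b ha hb => ha.add hb) Matrix.PosSemidef.zero
          (fun i _ => aux_psd_vecMulVec _))
  set u : ℕ → ℕ → ℝ := fun t i => x t i ⬝ᵥ (V t)⁻¹ *ᵥ x t i with hu
  have hun : ∀ t i, 0 ≤ u t i := by
    intro t i
    have := ((hVpd t).inv.posSemidef).dotProduct_mulVec_nonneg (x t i)
    simpa [hu] using this
  -- one-step determinant inequality
  have hstep : ∀ t, (V t).det * (1 + ∑ i ∈ Finset.range k, u t i) ≤ (V (t+1)).det := by
    intro t
    have hVt1 : V (t+1) = V t + ∑ i ∈ Finset.range k, vecMulVec (x t i) (x t i) := by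
      rw [hV (t+1), hV t, Finset.sum_range_succ, add_assoc]
    rw [hVt1]
    have h := aux_det_add_psd (hVpd t) (hB t)
    have htr : ((V t)⁻¹ * ∑ i ∈ Finset.range k, vecMulVec (x t i) (x t i)).trace
        = ∑ i ∈ Finset.range k, u t i := by
      rw [Finset.mul_sum, Matrix.trace_sum]
      exact Finset.sum_congr rfl fun i _ => aux_trace_mul_vecMulVec _ _
    rwa [htr] at h
  -- one-step log inequality
  have hlogstep : ∀ t, ∑ i ∈ Finset.range k, min (1/(k:ℝ)) (u t i)
      ≤ 2 * (Real.log (V (t+1)).det - Real.log (V t).det) := by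
    intro t
    have hsnn : 0 ≤ ∑ i ∈ Finset.range k, u t i := Finset.sum_nonneg fun i _ => hun t i
    have h1 : ∑ i ∈ Finset.range k, min (1/(k:ℝ)) (u t i)
        ≤ min 1 (∑ i ∈ Finset.range k, u t i) := by
      apply le_min
      · calc ∑ i ∈ Finset.range k, min (1/(k:ℝ)) (u t i)
            ≤ ∑ _i ∈ Finset.range k, 1/(k:ℝ) := Finset.sum_le_sum fun i _ => min_le_left _ _
          _ = 1 := by
            rw [Finset.sum_const, Finset.card_range, nsmul_eq_mul]
            field_simp
      · exact Finset.sum_le_sum fun i _ => min_le_right _ _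
    have h2 := aux_min_one_le_two_log _ hsnn
    have hd1 : 0 < (V t).det := (hVpd t).det_pos
    have h3 : Real.log (1 + ∑ i ∈ Finset.range k, u t i)
        ≤ Real.log (V (t+1)).det - Real.log (V t).det := by
      have hpos : 0 < (V t).det * (1 + ∑ i ∈ Finset.range k, u t i) :=
        mul_pos hd1 (by linarith)
      have hlog := Real.log_le_log hpos (hstep t)
      rw [Real.log_mul hd1.ne' (by linarith : (1:ℝ) + ∑ i ∈ Finset.range k, u t i ≠ 0)] at hlog
      linarith
    linarith
  -- telescoping
  have htotal : ∑ t ∈ Finset.range T, ∑ i ∈ Finset.range k, min (1/(k:ℝ)) (u t i)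
      ≤ 2 * (Real.log (V T).det - Real.log (V 0).det) := by
    calc ∑ t ∈ Finset.range T, ∑ i ∈ Finset.range k, min (1/(k:ℝ)) (u t i)
        ≤ ∑ t ∈ Finset.range T, 2 * (Real.log (V (t+1)).det - Real.log (V t).det) :=
          Finset.sum_le_sum fun t _ => hlogstep t
      _ = 2 * ∑ t ∈ Finset.range T, (Real.log (V (t+1)).det - Real.log (V t).det) := by
          rw [Finset.mul_sum]
      _ = 2 * (Real.log (V T).det - Real.log (V 0).det) := by
          rw [Finset.sum_range_sub (fun t => Real.log (V t).det)]
  -- trace bound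
  have hx2 : ∀ t ∈ Finset.range T, ∀ i ∈ Finset.range k, ∑ j, (x t i j)^2 ≤ L^2 := by
    intro t ht i hi
    have h := hL t ht i hi
    have hnn : 0 ≤ ∑ j, (x t i j)^2 := Finset.sum_nonneg fun j _ => sq_nonneg _
    nlinarith [Real.sq_sqrt hnn, Real.sqrt_nonneg (∑ j, (x t i j)^2)]
  have htrV : (V T).trace = lam * d + ∑ s ∈ Finset.range T, ∑ i ∈ Finset.range k,
      (∑ j, (x s i j)^2) := by
    rw [hV T, trace_add, trace_smul, trace_one, Matrix.trace_sum]
    congr 1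
    · simp [Fintype.card_fin, smul_eq_mul]
    · apply Finset.sum_congr rfl
      intro s _
      rw [Matrix.trace_sum]
      apply Finset.sum_congr rfl
      intro i _
      simp [Matrix.trace, Matrix.diag, vecMulVec_apply, sq]
  have htraceub : (V T).trace ≤ lam * d + L^2 * k * T := by
    rw [htrV]
    have : ∑ s ∈ Finset.range T, ∑ i ∈ Finset.range k, (∑ j, (x s i j)^2)
        ≤ ∑ s ∈ Finset.range T, ∑ i ∈ Finset.range k, L^2 := by
      apply Finset.sum_le_sum
      intro s hs
      exact Finset.sum_le_sum fun i hi => hx2 s hs i hi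
    have heq : ∑ s ∈ Finset.range T, ∑ i ∈ Finset.range k, L^2 = L^2 * k * T := by
      simp [Finset.sum_const, Finset.card_range, nsmul_eq_mul]
      ring
    linarith
  have htracelb : lam * d ≤ (V T).trace := by
    rw [htrV]
    have : 0 ≤ ∑ s ∈ Finset.range T, ∑ i ∈ Finset.range k, (∑ j, (x s i j)^2) :=
      Finset.sum_nonneg fun s _ => Finset.sum_nonneg fun i _ =>
        Finset.sum_nonneg fun j _ => sq_nonneg _
    linarith
  have htrpos : 0 < (V T).trace := lt_of_lt_of_le (by positivity) htracelb
  -- log det bounds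
  have hdetVT : Real.log (V T).det ≤ d * Real.log ((V T).trace / d) := by
    have h := aux_det_le_pow (hVpd T) (by simpa [Fintype.card_fin] using hd)
    rw [Fintype.card_fin] at h
    have hlog := Real.log_le_log (hVpd T).det_pos h
    rwa [Real.log_pow] at hlog
  have hV0 : Real.log (V 0).det = d * Real.log lam := by
    rw [hV 0]
    simp only [Finset.range_zero, Finset.sum_empty, add_zero]
    rw [det_smul, det_one, mul_one, Fintype.card_fin, Real.log_pow]
  -- arithmetic with logs
  set R : ℝ := 1 + L ^ 2 * k * T / (d * lam) with hR
  have hRone : (1:ℝ) ≤ R := by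
    rw [hR]
    have : 0 ≤ L ^ 2 * (k:ℝ) * T / (d * lam) := by positivity
    linarith
  have hRpos : (0:ℝ) < R := lt_of_lt_of_le one_pos hRone
  have hRlam : (V T).trace / d ≤ R * lam := by
    rw [div_le_iff₀ hdR]
    have hRd : R * lam * d = lam * d + L^2 * k * T := by
      rw [hR]
      field_simp
    linarith
  have hlogtr : Real.log ((V T).trace / d) ≤ Real.log R + Real.log lam := by
    rw [← Real.log_mul hRpos.ne' hlam.ne']
    exact Real.log_le_log (by positivity) hRlam
  have hC : ∑ t ∈ Finset.range T, ∑ i ∈ Finset.range k, min (1/(k:ℝ)) (u t i)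
      ≤ 2 * d * Real.log R := by
    have h1 : (d:ℝ) * Real.log ((V T).trace / d) ≤ d * (Real.log R + Real.log lam) :=
      mul_le_mul_of_nonneg_left hlogtr hdR.le
    have h2 : Real.log (V T).det - Real.log (V 0).det ≤ d * Real.log R := by
      rw [hV0]
      calc Real.log (V T).det - d * Real.log lam
          ≤ d * Real.log ((V T).trace / d) - d * Real.log lam := by linarith
        _ ≤ d * (Real.log R + Real.log lam) - d * Real.log lam := by linarith
        _ = d * Real.log R := by ring
    linarith
  have hlogRnn : 0 ≤ Real.log R := Real.log_nonneg hRone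
  -- final Cauchy-Schwarz step
  have hterm : ∀ t i, min (1 / Real.sqrt k) (Real.sqrt (u t i))
      = Real.sqrt (min (1/(k:ℝ)) (u t i)) := by
    intro t i
    rw [aux_sqrt_min, one_div, one_div, Real.sqrt_inv]
  calc ∑ t ∈ Finset.range T, ∑ i ∈ Finset.range k,
        min (1 / Real.sqrt k) (Real.sqrt (x t i ⬝ᵥ (V t)⁻¹ *ᵥ x t i))
      = ∑ p ∈ Finset.range T ×ˢ Finset.range k, Real.sqrt (min (1/(k:ℝ)) (u p.1 p.2)) := by
        rw [Finset.sum_product]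
        exact Finset.sum_congr rfl fun t _ => Finset.sum_congr rfl fun i _ => hterm t i
    _ ≤ Real.sqrt ((Finset.range T ×ˢ Finset.range k).card *
          ∑ p ∈ Finset.range T ×ˢ Finset.range k, min (1/(k:ℝ)) (u p.1 p.2)) := by
        apply aux_sum_sqrt_le
        intro p _
        exact le_min (by positivity) (hun p.1 p.2)
    _ ≤ Real.sqrt (2 * d * k * T * Real.log R) := by
        apply Real.sqrt_le_sqrt
        have hcard : ((Finset.range T ×ˢ Finset.range k).card : ℝ) = T * k := by
          rw [Finset.card_product, Finset.card_range, Finset.card_range]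
          push_cast
          ring
        have hsum : ∑ p ∈ Finset.range T ×ˢ Finset.range k, min (1/(k:ℝ)) (u p.1 p.2)
            = ∑ t ∈ Finset.range T, ∑ i ∈ Finset.range k, min (1/(k:ℝ)) (u t i) := by
          rw [Finset.sum_product]
        rw [hcard, hsum]
        calc (T:ℝ) * k * (∑ t ∈ Finset.range T, ∑ i ∈ Finset.range k, min (1/(k:ℝ)) (u t i))
            ≤ (T:ℝ) * k * (2 * d * Real.log R) := by
              apply mul_le_mul_of_nonneg_left hC (by positivity)
          _ = 2 * d * k * T * Real.log R := by ring
end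

section
/- Let V₀ = λI with λ > 0 and V_t = V_{t−1} + Σ_{i=1}^k x_t(i)x_t(i)ᵀ where ‖x_t(i)‖₂ ≤ L. Then log det(V_T) − log det(λI) ≥ (1/(2k)) · Σ_{t=1}^T Σ_{i=1}^k min(1, k·x_t(i)ᵀV_{t−1}^{-1}x_t(i)). -/
open Matrix

lemma half_min_le_log {u : ℝ} (hu : 0 ≤ u) :
    (1 / 2) * min 1 u ≤ Real.log (1 + u) := by
  have hpos : (0 : ℝ) < 1 + u := by linarith
  rcases le_total u 1 with h | h
  · rw [min_eq_right h, Real.le_log_iff_exp_le hpos]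
    have h1 := Real.add_one_le_exp (-(u / 2))
    have h2 : Real.exp (-(u / 2)) * Real.exp (u / 2) = 1 := by
      rw [← Real.exp_add]; norm_num
    have h3 := Real.exp_pos (u / 2)
    have h4 : (1 / 2) * u = u / 2 := by ring
    rw [h4]
    nlinarith [Real.exp_pos (-(u / 2))]
  · rw [min_eq_left h, Real.le_log_iff_exp_le hpos]
    have h1 : Real.exp (1 / 2) * Real.exp (1 / 2) = Real.exp 1 := by
      rw [← Real.exp_add]; norm_num
    have h2 := Real.exp_one_lt_d9
    have h3 := Real.exp_pos (1 / 2 : ℝ)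
    have h4 : (1 / 2 : ℝ) * 1 = 1 / 2 := by ring
    rw [h4]
    nlinarith

lemma one_add_sum_le_prod_one_add {ι : Type*} (s : Finset ι) (f : ι → ℝ)
    (h : ∀ i ∈ s, 0 ≤ f i) :
    1 + ∑ i ∈ s, f i ≤ ∏ i ∈ s, (1 + f i) := by
  induction s using Finset.cons_induction with
  | empty => simp
  | cons a s ha ih =>
    simp only [Finset.sum_cons, Finset.prod_cons]
    have h1 : 0 ≤ f a := h a (Finset.mem_cons_self a s)
    have h2 : ∀ i ∈ s, 0 ≤ f i := fun i hi => h i (Finset.mem_cons_of_mem hi)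
    have hs : 0 ≤ ∑ i ∈ s, f i := Finset.sum_nonneg h2
    have hih := ih h2
    nlinarith

lemma one_add_trace_le_det_one_add {n : Type*} [Fintype n] [DecidableEq n]
    {M : Matrix n n ℝ} (hM : M.PosSemidef) :
    1 + M.trace ≤ (1 + M).det := by
  have hH : M.IsHermitian := hM.1
  set U : Matrix n n ℝ := (hH.eigenvectorUnitary : Matrix n n ℝ) with hUdef
  have hspec : M = U * diagonal hH.eigenvalues * star U := by
    have := hH.spectral_theorem
    rwa [RCLike.ofReal_real_eq_id, Function.id_comp] at this
  have hUU : U * star U = 1 := mem_unitaryGroup_iff.mp hH.eigenvectorUnitary.2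
  have hUU' : star U * U = 1 := mem_unitaryGroup_iff'.mp hH.eigenvectorUnitary.2
  have h1M : 1 + M = U * (1 + diagonal hH.eigenvalues) * star U := by
    rw [mul_add, add_mul, mul_one, hUU, ← hspec]
  have hdet : (1 + M).det = ∏ i, (1 + hH.eigenvalues i) := by
    rw [h1M, det_mul, det_mul, mul_comm, ← mul_assoc, ← det_mul, hUU', det_one, one_mul,
      ← diagonal_one, diagonal_add, det_diagonal]
  have htr : M.trace = ∑ i, hH.eigenvalues i := by
    conv_lhs => rw [hspec]
    rw [trace_mul_cycle, hUU', one_mul, trace_diagonal]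
  rw [hdet, htr]
  exact one_add_sum_le_prod_one_add _ _ (fun i _ => hM.eigenvalues_nonneg i)

lemma trace_vecMulVec_mul {d : ℕ} (x : Fin d → ℝ) (A : Matrix (Fin d) (Fin d) ℝ) :
    (vecMulVec x x * A).trace = x ⬝ᵥ A *ᵥ x := by
  simp only [Matrix.trace, Matrix.diag, Matrix.mul_apply, vecMulVec_apply,
    dotProduct, Matrix.mulVec, Finset.mul_sum]
  rw [Finset.sum_comm]
  congr 1; ext j
  congr 1; ext i; ring


open scoped MatrixOrder in
lemma log_det_add {d : ℕ} {P S : Matrix (Fin d) (Fin d) ℝ}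
    (hP : P.PosDef) (hS : S.PosSemidef) (hτ : 0 ≤ (P⁻¹ * S).trace) :
    Real.log P.det + Real.log (1 + (P⁻¹ * S).trace) ≤ Real.log (P + S).det := by
  have hPS := hP.posSemidef
  set R := CFC.sqrt P with hRdef
  have hRsd : R.PosSemidef := (CFC.sqrt_nonneg P).posSemidef
  have hRR : R * R = P := CFC.sqrt_mul_sqrt_self P hPS.nonneg
  have hdetP : 0 < P.det := hP.det_pos
  have hR2 : R.det * R.det = P.det := by rw [← det_mul, hRR]
  have hdetR : R.det ≠ 0 := by
    intro h; rw [h, mul_zero] at hR2; exact absurd hR2.symm (ne_of_gt hdetP)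
  have hRinv : R * R⁻¹ = 1 := mul_nonsing_inv _ (isUnit_iff_ne_zero.mpr hdetR)
  have hRinv' : R⁻¹ * R = 1 := nonsing_inv_mul _ (isUnit_iff_ne_zero.mpr hdetR)
  set M := R⁻¹ * S * R⁻¹ with hMdef
  have hMps : M.PosSemidef := by
    have h := hS.mul_mul_conjTranspose_same R⁻¹
    rwa [conjTranspose_nonsing_inv, hRsd.1] at h
  have hmid : R * (R⁻¹ * S * R⁻¹) * R = S := by
    rw [← mul_assoc, ← mul_assoc, hRinv, one_mul, mul_assoc, hRinv', mul_one]
  have hPS_eq : P + S = R * (1 + M) * R := by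
    rw [mul_add, add_mul, mul_one, hRR, hMdef, hmid]
  have hPinv : P⁻¹ = R⁻¹ * R⁻¹ := by rw [← hRR, Matrix.mul_inv_rev]
  have htr : M.trace = (P⁻¹ * S).trace := by
    rw [hMdef, trace_mul_comm, ← mul_assoc, ← hPinv, trace_mul_comm]
  have hdet1M : 1 + (P⁻¹ * S).trace ≤ (1 + M).det := htr ▸ one_add_trace_le_det_one_add hMps
  have hpos1 : (0:ℝ) < 1 + (P⁻¹ * S).trace := by linarith
  have hdetpos : 0 < (1 + M).det := lt_of_lt_of_le hpos1 hdet1M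
  have hdet : (P + S).det = P.det * (1 + M).det := by
    rw [hPS_eq, det_mul, det_mul]
    rw [mul_comm R.det _, mul_assoc, hR2, mul_comm]
  rw [hdet, Real.log_mul (ne_of_gt hdetP) (ne_of_gt hdetpos)]
  exact add_le_add_right (Real.log_le_log hpos1 hdet1M) _

theorem logDet_potential_lower_bound {d k T : ℕ} (hk : 0 < k)
    (L lam : ℝ) (hlam : 0 < lam) (x : ℕ → ℕ → (Fin d → ℝ))
    (hL : ∀ t ∈ Finset.range T, ∀ i ∈ Finset.range k, Real.sqrt (∑ j, (x t i j) ^ 2) ≤ L)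
    (V : ℕ → Matrix (Fin d) (Fin d) ℝ)
    (hV0 : V 0 = lam • (1 : Matrix (Fin d) (Fin d) ℝ))
    (hVs : ∀ t, V (t + 1) = V t + ∑ i ∈ Finset.range k, vecMulVec (x t i) (x t i)) :
    Real.log (V T).det - Real.log (lam • (1 : Matrix (Fin d) (Fin d) ℝ)).det ≥
      (1 / (2 * (k : ℝ))) * ∑ t ∈ Finset.range T, ∑ i ∈ Finset.range k,
        min 1 ((k : ℝ) * (x t i ⬝ᵥ (V t)⁻¹ *ᵥ x t i)) := by
  have hk' : (0 : ℝ) < (k : ℝ) := Nat.cast_pos.mpr hk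
  have hSps : ∀ t, (∑ i ∈ Finset.range k, vecMulVec (x t i) (x t i)).PosSemidef := by
    intro t
    refine Finset.sum_induction _ _ (fun a b ha hb => ha.add hb) Matrix.PosSemidef.zero ?_
    intro i _
    have hvv : vecMulVec (x t i) (x t i)
        = replicateCol (Fin 1) (x t i) * (replicateCol (Fin 1) (x t i))ᴴ := by
      rw [conjTranspose_replicateCol, star_trivial]; exact vecMulVec_eq (Fin 1) _ _
    rw [hvv]
    exact posSemidef_self_mul_conjTranspose _
  have hPD : ∀ t, (V t).PosDef := by
    intro t
    induction t with
    | zero =>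
      rw [hV0, smul_one_eq_diagonal]
      exact Matrix.PosDef.diagonal (fun _ => hlam)
    | succ n ih =>
      rw [hVs n]
      exact ih.add_posSemidef (hSps n)
  have hu : ∀ t i, 0 ≤ x t i ⬝ᵥ (V t)⁻¹ *ᵥ x t i := by
    intro t i
    have h := ((hPD t).inv).posSemidef.dotProduct_mulVec_nonneg (x t i)
    simpa using h
  have htrace : ∀ t, ((V t)⁻¹ * ∑ i ∈ Finset.range k, vecMulVec (x t i) (x t i)).trace
      = ∑ i ∈ Finset.range k, x t i ⬝ᵥ (V t)⁻¹ *ᵥ x t i := by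
    intro t
    rw [Finset.mul_sum, trace_sum]
    exact Finset.sum_congr rfl fun i _ => by
      rw [trace_mul_comm, trace_vecMulVec_mul]
  have hstep : ∀ t, (1 / (2 * (k : ℝ))) *
      ∑ i ∈ Finset.range k, min 1 ((k : ℝ) * (x t i ⬝ᵥ (V t)⁻¹ *ᵥ x t i)) ≤
      Real.log (V (t + 1)).det - Real.log (V t).det := by
    intro t
    set τ := ∑ i ∈ Finset.range k, x t i ⬝ᵥ (V t)⁻¹ *ᵥ x t i with hτdef
    have hτ0 : 0 ≤ τ := Finset.sum_nonneg fun i _ => hu t i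
    have hlog : Real.log (1 + τ) ≤ Real.log (V (t + 1)).det - Real.log (V t).det := by
      have h := log_det_add (hPD t) (hSps t) (by rw [htrace t]; exact hτ0)
      rw [htrace t] at h
      rw [hVs t]
      linarith
    have hsum : ∑ i ∈ Finset.range k, min 1 ((k : ℝ) * (x t i ⬝ᵥ (V t)⁻¹ *ᵥ x t i))
        ≤ (k : ℝ) * min 1 τ := by
      rcases le_total τ 1 with h | h
      · rw [min_eq_right h]
        calc ∑ i ∈ Finset.range k, min 1 ((k : ℝ) * (x t i ⬝ᵥ (V t)⁻¹ *ᵥ x t i))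
            ≤ ∑ i ∈ Finset.range k, (k : ℝ) * (x t i ⬝ᵥ (V t)⁻¹ *ᵥ x t i) :=
              Finset.sum_le_sum fun i _ => min_le_right _ _
          _ = (k : ℝ) * τ := by rw [hτdef, Finset.mul_sum]
      · rw [min_eq_left h, mul_one]
        calc ∑ i ∈ Finset.range k, min 1 ((k : ℝ) * (x t i ⬝ᵥ (V t)⁻¹ *ᵥ x t i))
            ≤ ∑ _i ∈ Finset.range k, (1 : ℝ) :=
              Finset.sum_le_sum fun i _ => min_le_left _ _
          _ = (k : ℝ) := by simp
    have harith : (1 / (2 * (k : ℝ))) * ((k : ℝ) * min 1 τ) = (1 / 2) * min 1 τ := by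
      field_simp
    calc (1 / (2 * (k : ℝ))) *
          ∑ i ∈ Finset.range k, min 1 ((k : ℝ) * (x t i ⬝ᵥ (V t)⁻¹ *ᵥ x t i))
        ≤ (1 / (2 * (k : ℝ))) * ((k : ℝ) * min 1 τ) := by
          apply mul_le_mul_of_nonneg_left hsum
          positivity
      _ = (1 / 2) * min 1 τ := harith
      _ ≤ Real.log (1 + τ) := half_min_le_log hτ0
      _ ≤ _ := hlog
  have main : ∀ n, (1 / (2 * (k : ℝ))) * ∑ t ∈ Finset.range n, ∑ i ∈ Finset.range k,
      min 1 ((k : ℝ) * (x t i ⬝ᵥ (V t)⁻¹ *ᵥ x t i))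
      ≤ Real.log (V n).det - Real.log (V 0).det := by
    intro n
    induction n with
    | zero => simp
    | succ m ih =>
      rw [Finset.sum_range_succ, mul_add]
      have h := hstep m
      linarith
  have h := main T
  rw [hV0] at h
  exact h
end
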